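/- For a doubling weight w on ℝⁿ with doubling constant C_w < 3^{np} (doubling with respect to tripling of cubes), one has ∫_{ℝⁿ} (M 1_I(x))^p w(x) dx ≈ w(I) for every cube I, with implied constants independent of I. -/

import Mathlib

open MeasureTheory ENNReal

structure Cube (n : ℕ) where
  c : Fin n → ℝ
  r : ℝ
  hr : 0 < r

namespace Cube

def set {n : ℕ} (I : Cube n) : Set (Fin n → ℝ) :=
  {x | ∀ i, I.c i - I.r ≤ x i ∧ x i < I.c i + I.r}

noncomputable def side {n : ℕ} (I : Cube n) : ℝ := 2 * I.r

noncomputable def vol {n : ℕ} (I : Cube n) : ℝ := (2 * I.r) ^ n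

def double {n : ℕ} (I : Cube n) : Cube n := ⟨I.c, 2 * I.r, by have := I.hr; linarith⟩

def triple {n : ℕ} (I : Cube n) : Cube n := ⟨I.c, 3 * I.r, by have := I.hr; linarith⟩

end Cube

noncomputable def poisson {n : ℕ} (I : Cube n) (ω : Measure (Fin n → ℝ)) : ℝ≥0∞ :=
  ∫⁻ x, (ENNReal.ofReal (I.side / (I.side + Metric.infDist x I.set) ^ 2)) ^ n ∂ω

noncomputable def maximal {n : ℕ} (μ : Measure (Fin n → ℝ)) (x : Fin n → ℝ) : ℝ≥0∞ :=
  ⨆ (I : Cube n) (_ : x ∈ I.set), μ I.set / ENNReal.ofReal I.vol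

noncomputable def wMass {n : ℕ} (w : (Fin n → ℝ) → ℝ≥0∞) (E : Set (Fin n → ℝ)) : ℝ≥0∞ :=
  ∫⁻ x in E, w x


noncomputable def maximalIntegral {n : ℕ} (w : (Fin n → ℝ) → ℝ≥0∞) (p : ℝ) (I : Cube n) : ℝ≥0∞ :=
  ∫⁻ x, (maximal (volume.restrict I.set) x) ^ p * w x

section Aux
variable {n : ℕ}

lemma cube_set_eq (I : Cube n) :
    I.set = Set.pi Set.univ fun i => Set.Ico (I.c i - I.r) (I.c i + I.r) := by
  ext x; simp [Cube.set, Set.mem_pi]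

lemma cube_measurable (I : Cube n) : MeasurableSet I.set := by
  rw [cube_set_eq]
  exact MeasurableSet.univ_pi fun i => measurableSet_Ico

lemma cube_volume (I : Cube n) : volume I.set = ENNReal.ofReal I.vol := by
  rw [cube_set_eq, volume_pi_pi]
  have : ∀ i : Fin n, volume (Set.Ico (I.c i - I.r) (I.c i + I.r)) = ENNReal.ofReal (2 * I.r) := by
    intro i; rw [Real.volume_Ico]; ring_nf
  simp only [this, Finset.prod_const, Finset.card_univ, Fintype.card_fin]
  rw [Cube.vol, ENNReal.ofReal_pow (by have := I.hr; linarith)]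

lemma cube_vol_pos (I : Cube n) : 0 < I.vol := by
  have h : 0 < I.r := I.hr; unfold Cube.vol; positivity

lemma cube_set_congr (I J : Cube n) (hc : I.c = J.c) (hr : I.r = J.r) : I.set = J.set := by
  unfold Cube.set; rw [hc, hr]

lemma maximal_le_one (I : Cube n) (x : Fin n → ℝ) :
    maximal (volume.restrict I.set) x ≤ 1 := by
  refine iSup₂_le fun J hx => ?_
  have h1 : volume.restrict I.set J.set ≤ ENNReal.ofReal J.vol := by
    rw [Measure.restrict_apply (cube_measurable J), ← cube_volume J]
    exact measure_mono Set.inter_subset_left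
  calc volume.restrict I.set J.set / ENNReal.ofReal J.vol
      ≤ ENNReal.ofReal J.vol / ENNReal.ofReal J.vol := ENNReal.div_le_div h1 le_rfl
    _ = 1 := ENNReal.div_self (ne_of_gt (ENNReal.ofReal_pos.2 (cube_vol_pos J)))
        ENNReal.ofReal_ne_top

lemma one_le_maximal (I : Cube n) (x : Fin n → ℝ) (hx : x ∈ I.set) :
    1 ≤ maximal (volume.restrict I.set) x := by
  have h : volume.restrict I.set I.set / ENNReal.ofReal I.vol = 1 := by
    rw [Measure.restrict_apply (cube_measurable I), Set.inter_self, cube_volume I]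
    exact ENNReal.div_self (ne_of_gt (ENNReal.ofReal_pos.2 (cube_vol_pos I))) ENNReal.ofReal_ne_top
  rw [← h]
  exact le_iSup₂ (f := fun (J : Cube n) (_ : x ∈ J.set) =>
    volume.restrict I.set J.set / ENNReal.ofReal J.vol) I hx

lemma maximal_le_of_far (I : Cube n) (x : Fin n → ℝ) (d : ℝ) (hd : 0 < d)
    (hfar : ∀ y ∈ I.set, d ≤ dist x y) :
    maximal (volume.restrict I.set) x ≤ ENNReal.ofReal I.vol / ENNReal.ofReal (d ^ n) := by
  refine iSup₂_le fun J hx => ?_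
  rw [Measure.restrict_apply (cube_measurable J)]
  rcases Set.eq_empty_or_nonempty (J.set ∩ I.set) with he | ⟨y, hyJ, hyI⟩
  · simp [he]
  · have hdy : d ≤ dist x y := hfar y hyI
    have hxy : dist x y ≤ 2 * J.r := by
      rw [dist_pi_le_iff (by have := J.hr; linarith)]
      intro i
      rw [Real.dist_eq, abs_le]
      constructor <;> simp only [Cube.set, Set.mem_setOf_eq] at * <;>
        nlinarith [(hx i).1, (hx i).2, (hyJ i).1, (hyJ i).2]
    have hdn : d ^ n ≤ J.vol := by
      rw [Cube.vol]
      exact pow_le_pow_left₀ hd.le (hdy.trans hxy) n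
    refine ENNReal.div_le_div ?_ (ENNReal.ofReal_le_ofReal hdn)
    rw [← cube_volume I]; exact measure_mono Set.inter_subset_right

def bigCube (I : Cube n) (m : ℕ) : Cube n :=
  ⟨I.c, 3 ^ m * I.r, by have := I.hr; positivity⟩

lemma bigCube_zero (I : Cube n) : (bigCube I 0).set = I.set :=
  cube_set_congr _ _ rfl (by simp [bigCube])

lemma bigCube_succ (I : Cube n) (m : ℕ) :
    (bigCube I (m + 1)).set = (bigCube I m).triple.set :=
  cube_set_congr _ _ rfl (by simp [bigCube, Cube.triple]; ring)

def shell (I : Cube n) : ℕ → Set (Fin n → ℝ)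
  | 0 => (bigCube I 1).set
  | (m+1) => (bigCube I (m+2)).set \ (bigCube I (m+1)).set

lemma shell_measurable (I : Cube n) (m : ℕ) : MeasurableSet (shell I m) := by
  cases m with
  | zero => exact cube_measurable _
  | succ k => exact (cube_measurable _).diff (cube_measurable _)

lemma shell_cover (I : Cube n) : (⋃ m, shell I m) = Set.univ := by
  refine Set.eq_univ_of_forall fun x => ?_
  have hex : ∃ M, x ∈ (bigCube I (M + 1)).set := by
    obtain ⟨M, hM⟩ := pow_unbounded_of_one_lt (dist x I.c / I.r) (by norm_num : (1:ℝ) < 3)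
    refine ⟨M, fun i => ?_⟩
    have h1 : dist (x i) (I.c i) ≤ dist x I.c := dist_le_pi_dist x I.c i
    have h2 : dist x I.c < 3 ^ M * I.r := by rwa [div_lt_iff₀ I.hr] at hM
    have h3 : (3:ℝ) ^ M * I.r ≤ 3 ^ (M+1) * I.r := by
      have h30 : (0:ℝ) ≤ 3 ^ M := by positivity
      have := I.hr
      rw [pow_succ]
      nlinarith
    have h4 : |x i - I.c i| < 3 ^ (M+1) * I.r := by
      have h5 := h1.trans_lt h2
      rw [Real.dist_eq] at h5
      linarith
    have h5 := abs_lt.1 h4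
    simp only [bigCube, Cube.set, Set.mem_setOf_eq]
    constructor <;> linarith [h5.1, h5.2]
  classical
  rcases Nat.eq_zero_or_pos (Nat.find hex) with h0 | hpos
  · refine Set.mem_iUnion.2 ⟨0, ?_⟩
    have := Nat.find_spec hex; rw [h0] at this; exact this
  · obtain ⟨k, hk⟩ : ∃ k, Nat.find hex = k + 1 := ⟨Nat.find hex - 1, by omega⟩
    refine Set.mem_iUnion.2 ⟨k + 1, ?_, ?_⟩
    · have := Nat.find_spec hex; rwa [hk] at this
    · exact Nat.find_min hex (show k < Nat.find hex by omega)

lemma far_of_not_mem (I : Cube n) (x : Fin n → ℝ) (k : ℕ)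
    (hx : x ∉ (bigCube I (k+1)).set) :
    ∀ y ∈ I.set, ((3:ℝ) ^ (k+1) - 1) * I.r ≤ dist x y := by
  intro y hy
  simp only [bigCube, Cube.set, Set.mem_setOf_eq, not_forall] at hx
  obtain ⟨i, hi⟩ := hx
  have hyi := hy i
  have h1 : dist (x i) (y i) ≤ dist x y := dist_le_pi_dist x y i
  rw [Real.dist_eq] at h1
  have habs1 : x i - y i ≤ |x i - y i| := le_abs_self _
  have habs2 : -(x i - y i) ≤ |x i - y i| := neg_le_abs _
  rcases not_and_or.1 hi with h | h
  · push_neg at h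
    nlinarith [hyi.1, hyi.2]
  · push_neg at h
    nlinarith [hyi.1, hyi.2]

lemma maximal_le_shell (I : Cube n) (hn : 0 < n) (x : Fin n → ℝ) (k : ℕ)
    (hx : x ∉ (bigCube I (k+1)).set) :
    maximal (volume.restrict I.set) x ≤ ENNReal.ofReal ((((1:ℝ)/3) ^ n) ^ k) := by
  have h3k : (1:ℝ) ≤ 3 ^ k := one_le_pow₀ (by norm_num)
  have h3k1 : (1:ℝ) < 3 ^ (k+1) := by
    rw [pow_succ]; nlinarith
  have hd : 0 < ((3:ℝ) ^ (k+1) - 1) * I.r := by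
    have := I.hr; nlinarith
  refine le_trans (maximal_le_of_far I x _ hd (far_of_not_mem I x k hx)) ?_
  rw [← ENNReal.ofReal_div_of_pos (by positivity)]
  refine ENNReal.ofReal_le_ofReal ?_
  have hr := I.hr
  have ha : ((3:ℝ) ^ (k+1) - 1) ≠ 0 := by linarith
  have hrne : I.r ≠ 0 := ne_of_gt hr
  have key : I.vol / ((((3:ℝ) ^ (k+1) - 1) * I.r) ^ n) = (2 / ((3:ℝ) ^ (k+1) - 1)) ^ n := by
    rw [Cube.vol, ← div_pow]
    congr 1
    field_simp
  rw [key]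
  have hinner : 2 / ((3:ℝ) ^ (k+1) - 1) ≤ ((1:ℝ)/3) ^ k := by
    have e : ((1:ℝ)/3) ^ k = 1 / 3 ^ k := by rw [div_pow, one_pow]
    rw [e, div_le_div_iff₀ (by linarith) (by positivity)]
    have e2 : (3:ℝ) ^ (k+1) = 3 * 3 ^ k := by rw [pow_succ]; ring
    nlinarith
  calc (2 / ((3:ℝ) ^ (k+1) - 1)) ^ n ≤ (((1:ℝ)/3) ^ k) ^ n :=
        pow_le_pow_left₀ (div_nonneg (by norm_num) (by linarith)) hinner n
    _ = (((1:ℝ)/3) ^ n) ^ k := by rw [← pow_mul, ← pow_mul, Nat.mul_comm]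

end Aux

/-- For a doubling weight `w` with (tripling) doubling constant `C_w < 3^{np}`,
one has `∫ (M 1_I)^p w dx ≈ w(I)` uniformly in the cube `I`. -/
theorem stmt_1 (n : ℕ) (hn : 0 < n) (p : ℝ) (hp : 1 < p)
    (w : (Fin n → ℝ) → ℝ≥0∞) (hw : Measurable w)
    (hloc : ∀ I : Cube n, wMass w I.set < ⊤)
    (Cw : ℝ) (hCw : 0 < Cw) (hCwsmall : Cw < (3 : ℝ) ^ ((n : ℝ) * p))
    (hdoubling : ∀ I : Cube n, wMass w I.triple.set ≤ ENNReal.ofReal Cw * wMass w I.set) :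
    ∃ c₁ > (0:ℝ), ∃ c₂ > (0:ℝ), ∀ I : Cube n,
      ENNReal.ofReal c₁ * wMass w I.set ≤ maximalIntegral w p I ∧
      maximalIntegral w p I ≤ ENNReal.ofReal c₂ * wMass w I.set := by
  have hp0 : (0:ℝ) ≤ p := by linarith
  set b : ℝ := ((1:ℝ)/3) ^ n with hb
  have hb0 : 0 < b := by positivity
  set ρ : ℝ := b ^ p with hρ
  have hρ0 : 0 < ρ := Real.rpow_pos_of_pos hb0 p
  -- the ratio of the geometric series is < 1
  have hratio : Cw * ρ < 1 := by
    have h1 : (3:ℝ) ^ ((n:ℝ) * p) = ((3:ℝ) ^ n) ^ p := by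
      rw [Real.rpow_mul (by norm_num), Real.rpow_natCast]
    have h3 : (0:ℝ) < ((3:ℝ) ^ n) ^ p := Real.rpow_pos_of_pos (by positivity) p
    have h2 : ρ = (((3:ℝ) ^ n) ^ p)⁻¹ := by
      rw [hρ, hb, one_div, inv_pow, Real.inv_rpow (by positivity)]
    rw [h2, ← div_eq_mul_inv, div_lt_one h3, ← h1]
    exact hCwsmall
  -- iterated doubling
  have hiter : ∀ (I : Cube n) (m : ℕ),
      wMass w (bigCube I m).set ≤ ENNReal.ofReal Cw ^ m * wMass w I.set := by
    intro I m
    induction m with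
    | zero => rw [bigCube_zero, pow_zero, one_mul]
    | succ m ih =>
      have h1 : wMass w (bigCube I (m+1)).set = wMass w (bigCube I m).triple.set := by
        unfold wMass; rw [bigCube_succ]
      rw [h1, pow_succ]
      calc wMass w (bigCube I m).triple.set
          ≤ ENNReal.ofReal Cw * wMass w (bigCube I m).set := hdoubling _
        _ ≤ ENNReal.ofReal Cw * (ENNReal.ofReal Cw ^ m * wMass w I.set) :=
            mul_le_mul_right ih _
        _ = ENNReal.ofReal Cw ^ m * ENNReal.ofReal Cw * wMass w I.set := by ring
  -- the total constant
  set B : ℝ≥0∞ := ENNReal.ofReal Cw + ∑' k : ℕ, ENNReal.ofReal (Cw ^ (k+2) * ρ ^ k) with hB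
  have hterm : ∀ k : ℕ, ENNReal.ofReal (Cw ^ (k+2) * ρ ^ k)
      = ENNReal.ofReal (Cw ^ 2) * ENNReal.ofReal (Cw * ρ) ^ k := by
    intro k
    rw [← ENNReal.ofReal_pow (by positivity), ← ENNReal.ofReal_mul (by positivity)]
    congr 1
    ring
  have hBtop : B ≠ ⊤ := by
    rw [hB]
    refine ENNReal.add_ne_top.2 ⟨ENNReal.ofReal_ne_top, ?_⟩
    simp only [hterm]
    rw [ENNReal.tsum_mul_left, ENNReal.tsum_geometric]
    refine ENNReal.mul_ne_top ENNReal.ofReal_ne_top (ENNReal.inv_ne_top.2 ?_)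
    rw [ne_eq, tsub_eq_zero_iff_le, not_le]
    exact ENNReal.ofReal_lt_one.2 hratio
  refine ⟨1, one_pos, B.toReal + 1, by positivity, fun I => ⟨?_, ?_⟩⟩
  · -- lower bound with c₁ = 1
    rw [ENNReal.ofReal_one, one_mul]
    calc wMass w I.set
        ≤ ∫⁻ x in I.set, (maximal (volume.restrict I.set) x) ^ p * w x := by
          refine setLIntegral_mono' (cube_measurable I) fun x hx => ?_
          conv_lhs => rw [← one_mul (w x)]
          refine mul_le_mul_left ?_ _
          calc (1:ℝ≥0∞) = 1 ^ p := (ENNReal.one_rpow p).symm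
            _ ≤ (maximal (volume.restrict I.set) x) ^ p :=
                ENNReal.rpow_le_rpow (one_le_maximal I x hx) hp0
      _ ≤ maximalIntegral w p I := setLIntegral_le_lintegral _ _
  · -- upper bound with c₂ = B.toReal + 1
    have hcover : maximalIntegral w p I
        = ∫⁻ x in ⋃ m, shell I m, (maximal (volume.restrict I.set) x) ^ p * w x := by
      rw [shell_cover, Measure.restrict_univ]
      rfl
    have h0 : ∫⁻ x in shell I 0, (maximal (volume.restrict I.set) x) ^ p * w x
        ≤ ENNReal.ofReal Cw * wMass w I.set := by
      calc ∫⁻ x in shell I 0, (maximal (volume.restrict I.set) x) ^ p * w x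
          ≤ ∫⁻ x in shell I 0, w x := by
            refine setLIntegral_mono' (shell_measurable I 0) fun x _ => ?_
            conv_rhs => rw [← one_mul (w x)]
            refine mul_le_mul_left ?_ _
            calc (maximal (volume.restrict I.set) x) ^ p
                ≤ 1 ^ p := ENNReal.rpow_le_rpow (maximal_le_one I x) hp0
              _ = 1 := ENNReal.one_rpow p
        _ = wMass w (bigCube I 1).set := rfl
        _ ≤ ENNReal.ofReal Cw ^ 1 * wMass w I.set := hiter I 1
        _ = ENNReal.ofReal Cw * wMass w I.set := by rw [pow_one]
    have hk : ∀ k : ℕ, ∫⁻ x in shell I (k+1), (maximal (volume.restrict I.set) x) ^ p * w x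
        ≤ ENNReal.ofReal (Cw ^ (k+2) * ρ ^ k) * wMass w I.set := by
      intro k
      have hpow : ((b:ℝ) ^ k) ^ p = ρ ^ k := by
        rw [← Real.rpow_natCast b k, ← Real.rpow_mul hb0.le, mul_comm,
          Real.rpow_mul hb0.le, Real.rpow_natCast]
      calc ∫⁻ x in shell I (k+1), (maximal (volume.restrict I.set) x) ^ p * w x
          ≤ ∫⁻ x in shell I (k+1), ENNReal.ofReal ((b ^ k) ^ p) * w x := by
            refine setLIntegral_mono' (shell_measurable I (k+1)) fun x hx => ?_
            refine mul_le_mul_left ?_ _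
            calc (maximal (volume.restrict I.set) x) ^ p
                ≤ (ENNReal.ofReal (b ^ k)) ^ p :=
                  ENNReal.rpow_le_rpow (maximal_le_shell I hn x k hx.2) hp0
              _ = ENNReal.ofReal ((b ^ k) ^ p) := ENNReal.ofReal_rpow_of_pos (by positivity)
        _ = ENNReal.ofReal ((b ^ k) ^ p) * ∫⁻ x in shell I (k+1), w x :=
            lintegral_const_mul' _ _ ENNReal.ofReal_ne_top
        _ ≤ ENNReal.ofReal ((b ^ k) ^ p) * wMass w (bigCube I (k+2)).set :=
            mul_le_mul_right (lintegral_mono_set Set.diff_subset) _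
        _ ≤ ENNReal.ofReal ((b ^ k) ^ p) * (ENNReal.ofReal Cw ^ (k+2) * wMass w I.set) :=
            mul_le_mul_right (hiter I (k+2)) _
        _ = ENNReal.ofReal (Cw ^ (k+2) * ρ ^ k) * wMass w I.set := by
            rw [← mul_assoc]
            congr 1
            rw [← ENNReal.ofReal_pow hCw.le, ← ENNReal.ofReal_mul (by positivity), hpow,
              mul_comm]
    set g : ℕ → ℝ≥0∞ := fun m =>
      if m = 0 then ENNReal.ofReal Cw else ENNReal.ofReal (Cw ^ (m+1) * ρ ^ (m-1)) with hg
    have hgsum : ∑' m : ℕ, g m = B := by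
      rw [tsum_eq_zero_add' ENNReal.summable, hB]
      simp only [hg]
      congr 1 <;> first
        | simp
        | (refine tsum_congr fun k => ?_; simp)
    have hle : ∀ m : ℕ, (∫⁻ x in shell I m, (maximal (volume.restrict I.set) x) ^ p * w x)
        ≤ g m * wMass w I.set := by
      intro m
      cases m with
      | zero => simpa [hg] using h0
      | succ k => simpa [hg] using hk k
    calc maximalIntegral w p I
        ≤ ∑' m : ℕ, ∫⁻ x in shell I m, (maximal (volume.restrict I.set) x) ^ p * w x := by
          rw [hcover]
          exact lintegral_iUnion_le _ _
      _ ≤ ∑' m : ℕ, g m * wMass w I.set := ENNReal.tsum_le_tsum hle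
      _ = B * wMass w I.set := by rw [ENNReal.tsum_mul_right, hgsum]
      _ ≤ ENNReal.ofReal (B.toReal + 1) * wMass w I.set := by
          refine mul_le_mul_left ?_ _
          calc B = ENNReal.ofReal B.toReal := (ENNReal.ofReal_toReal hBtop).symm
            _ ≤ ENNReal.ofReal (B.toReal + 1) := ENNReal.ofReal_le_ofReal (by linarith)
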